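/- Let λ ≥ 0 and let φ : [0,∞) → ℝ be bounded and continuous. Define J_λ(t) := ∫₀ᵗ λ·e^(−λτ)·φ(τ) dτ + e^(−λt)·φ(t). Then inf_{t ≥ 0} J_λ(t) ≥ inf_{t ≥ 0} φ(t); that is, along any fixed trajectory the discounted safety value dominates the undiscounted safety value. -/

import Mathlib

/-- **Discounted safety value dominates the undiscounted one along a trajectory.**
For `λ ≥ 0` and a bounded continuous constraint signal `φ` on `[0,∞)`, the
discounted running cost `J_λ(t) = ∫₀ᵗ λ·e^(−λτ)·φ(τ) dτ + e^(−λt)·φ(t)` satisfies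
`inf_{t ≥ 0} J_λ(t) ≥ inf_{t ≥ 0} φ(t)`. -/
theorem discounted_inf_ge_undiscounted_inf (lam : ℝ) (hlam : 0 ≤ lam)
    (φ : ℝ → ℝ) (hφb : ∃ M, ∀ t, 0 ≤ t → |φ t| ≤ M)
    (hφc : ContinuousOn φ (Set.Ici 0)) :
    (⨅ t : Set.Ici (0:ℝ), φ t) ≤
      ⨅ t : Set.Ici (0:ℝ),
        (∫ τ in (0:ℝ)..(t:ℝ), lam * Real.exp (-(lam * τ)) * φ τ)
          + Real.exp (-(lam * (t:ℝ))) * φ t := by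
  obtain ⟨M, hM⟩ := hφb
  set m : ℝ := ⨅ t : Set.Ici (0:ℝ), φ t with hm
  have hbdd : BddBelow (Set.range fun t : Set.Ici (0:ℝ) => φ t) := by
    refine ⟨-M, ?_⟩
    rintro x ⟨⟨τ, hτ⟩, rfl⟩
    have h := abs_le.mp (hM τ hτ)
    simpa using h.1
  have hmle : ∀ τ, 0 ≤ τ → m ≤ φ τ := fun τ hτ => ciInf_le hbdd ⟨τ, hτ⟩
  refine le_ciInf ?_
  rintro ⟨t, ht⟩
  have ht : (0:ℝ) ≤ t := ht
  have hcont0 : Continuous fun τ : ℝ => lam * Real.exp (-(lam * τ)) := by continuity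
  have hint : IntervalIntegrable (fun τ => lam * Real.exp (-(lam * τ)) * φ τ)
      MeasureTheory.volume 0 t := by
    apply ContinuousOn.intervalIntegrable
    rw [Set.uIcc_of_le ht]
    exact (hcont0.continuousOn).mul (hφc.mono (Set.Icc_subset_Ici_self))
  have hint2 : IntervalIntegrable (fun τ => lam * Real.exp (-(lam * τ)) * m)
      MeasureTheory.volume 0 t := by
    apply Continuous.intervalIntegrable
    continuity
  have hmono : (∫ τ in (0:ℝ)..t, lam * Real.exp (-(lam * τ)) * m)
      ≤ ∫ τ in (0:ℝ)..t, lam * Real.exp (-(lam * τ)) * φ τ := by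
    apply intervalIntegral.integral_mono_on ht hint2 hint
    intro τ hτ
    have h1 := hmle τ hτ.1
    have hpos : 0 ≤ lam * Real.exp (-(lam * τ)) := mul_nonneg hlam (Real.exp_pos _).le
    nlinarith
  have hval : (∫ τ in (0:ℝ)..t, lam * Real.exp (-(lam * τ))) = 1 - Real.exp (-(lam * t)) := by
    have hd : ∀ τ ∈ Set.uIcc (0:ℝ) t,
        HasDerivAt (fun τ => -Real.exp (-(lam * τ))) (lam * Real.exp (-(lam * τ))) τ := by
      intro τ _
      have h1 : HasDerivAt (fun τ : ℝ => -(lam * τ)) (-lam) τ := by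
        exact ((hasDerivAt_id τ).const_mul lam).neg.congr_deriv (by ring)
      have h2 := (h1.exp).neg
      exact h2.congr_deriv (by ring)
    rw [intervalIntegral.integral_eq_sub_of_hasDerivAt hd (hcont0.intervalIntegrable _ _)]
    simp [Real.exp_zero]
    ring
  have hval2 : (∫ τ in (0:ℝ)..t, lam * Real.exp (-(lam * τ)) * m)
      = (1 - Real.exp (-(lam * t))) * m := by
    rw [intervalIntegral.integral_mul_const, hval]
  have hexppos : (0:ℝ) < Real.exp (-(lam * t)) := Real.exp_pos _
  have hterm : Real.exp (-(lam * t)) * m ≤ Real.exp (-(lam * t)) * φ t :=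
    mul_le_mul_of_nonneg_left (hmle t ht) hexppos.le
  have := hmono
  rw [hval2] at this
  nlinarith
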